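/- arXiv:2304.00619 — 3 statements merged into one kernel-verified Lean document; each statement's English description precedes it below -/
import Mathlib

section
/- For n ≥ 3, let Φ(x_1,…,x_n) = f(x_1) + Σ_{0<j<j+k≤n} x_j x_k x_n^{n-j-k} where f : ℝ → ℝ is twice differentiable. Then the Hessian matrix of Φ has rank exactly n-1 at every point of ℝ^n; in particular its kernel is one-dimensional everywhere. -/
open scoped BigOperators

/-- Hessian matrix of a function on `ℝⁿ` with respect to the standard basis. -/
noncomputable def hess {n : ℕ} (Φ : (Fin n → ℝ) → ℝ) (x : Fin n → ℝ) :
    Matrix (Fin n) (Fin n) ℝ :=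
  fun j k => fderiv ℝ (fun y => fderiv ℝ Φ y (Pi.single k 1)) x (Pi.single j 1)

variable {N : ℕ}

noncomputable def pr (i : Fin (N+3)) : (Fin (N+3) → ℝ) →L[ℝ] ℝ := ContinuousLinearMap.proj i
def iz : Fin (N+3) := ⟨0, by omega⟩
def Ls : Fin (N+3) := ⟨N+2, by omega⟩
noncomputable def Phi0 (N : ℕ) (f : ℝ → ℝ) : (Fin (N+3) → ℝ) → ℝ := fun x =>
  f (x iz) + ∑ a : Fin (N+3), ∑ b : Fin (N+3),
    if (a:ℕ)+(b:ℕ)+2 ≤ N+3 then x a * x b * (x Ls)^(N+1-(a:ℕ)-(b:ℕ)) else 0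
noncomputable def D1 (N : ℕ) (f : ℝ → ℝ) (y : Fin (N+3) → ℝ) : (Fin (N+3) → ℝ) →L[ℝ] ℝ :=
  (deriv f (y iz)) • pr iz + ∑ a : Fin (N+3), ∑ b : Fin (N+3),
    if (a:ℕ)+(b:ℕ)+2 ≤ N+3 then
      ((y b * (y Ls)^(N+1-(a:ℕ)-(b:ℕ))) • pr a + (y a * (y Ls)^(N+1-(a:ℕ)-(b:ℕ))) • pr b
        + (y a * y b * (((N+1-(a:ℕ)-(b:ℕ) : ℕ):ℝ) * (y Ls)^(N+1-(a:ℕ)-(b:ℕ)-1))) • pr Ls)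
    else 0

noncomputable def G (N : ℕ) (f : ℝ → ℝ) (k : Fin (N+3)) (y : Fin (N+3) → ℝ) : ℝ :=
  (if iz = k then deriv f (y iz) else 0) + ∑ a : Fin (N+3), ∑ b : Fin (N+3),
    if (a:ℕ)+(b:ℕ)+2 ≤ N+3 then
      ((if a = k then y b * (y Ls)^(N+1-(a:ℕ)-(b:ℕ)) else 0)
       + (if b = k then y a * (y Ls)^(N+1-(a:ℕ)-(b:ℕ)) else 0)
       + (if Ls = k then y a * y b * (((N+1-(a:ℕ)-(b:ℕ) : ℕ):ℝ) * (y Ls)^(N+1-(a:ℕ)-(b:ℕ)-1)) else 0))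
    else 0

lemma D1_apply_single (f : ℝ → ℝ) (k : Fin (N+3)) (y : Fin (N+3) → ℝ) :
    D1 N f y (Pi.single k 1) = G N f k y := by
  simp only [D1, G, ContinuousLinearMap.add_apply, ContinuousLinearMap.smul_apply,
    ContinuousLinearMap.coe_sum', Finset.sum_apply, pr, ContinuousLinearMap.proj_apply,
    Pi.single_apply, smul_eq_mul, mul_ite, mul_one, mul_zero]
  congr 1
  refine Finset.sum_congr rfl fun a _ => Finset.sum_congr rfl fun b _ => ?_
  split_ifs <;> simp_all [Pi.single_apply]

noncomputable def DV (b : Fin (N+3)) (E : ℕ) (x : Fin (N+3) → ℝ) : (Fin (N+3) → ℝ) →L[ℝ] ℝ :=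
  ((x Ls)^E) • pr b + (x b * ((E:ℝ) * (x Ls)^(E-1))) • pr Ls

lemma hasFDerivAt_V (b : Fin (N+3)) (E : ℕ) (x : Fin (N+3) → ℝ) :
    HasFDerivAt (fun y : Fin (N+3) → ℝ => y b * (y Ls)^E) (DV b E x) x := by
  have h := ((pr b).hasFDerivAt (x := x)).fun_mul (HasDerivAt.comp_hasFDerivAt x
    (hasDerivAt_pow E (x Ls)) ((pr Ls).hasFDerivAt))
  refine h.congr_fderiv ?_
  ext w
  simp only [DV, ContinuousLinearMap.add_apply, ContinuousLinearMap.smul_apply, pr,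
    ContinuousLinearMap.proj_apply, smul_eq_mul, Function.comp_apply, Function.comp]
  ring

noncomputable def DW (a b : Fin (N+3)) (c : ℝ) (E : ℕ) (x : Fin (N+3) → ℝ) :
    (Fin (N+3) → ℝ) →L[ℝ] ℝ :=
  (c * (x b * (x Ls)^(E-1))) • pr a + (c * (x a * (x Ls)^(E-1))) • pr b
    + (c * (x a * x b * (((E-1:ℕ):ℝ) * (x Ls)^(E-2)))) • pr Ls

lemma hasFDerivAt_W (a b : Fin (N+3)) (c : ℝ) (E : ℕ) (x : Fin (N+3) → ℝ) :
    HasFDerivAt (fun y : Fin (N+3) → ℝ => y a * y b * (c * (y Ls)^(E-1))) (DW a b c E x) x := by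
  have h0 : (fun y : Fin (N+3) → ℝ => y a * y b * (c * (y Ls)^(E-1)))
      = fun y => c * (y a * y b * (y Ls)^(E-1)) := by funext y; ring
  rw [h0]
  have h := (((pr a).hasFDerivAt (x := x)).fun_mul ((pr b).hasFDerivAt)).fun_mul
    (HasDerivAt.comp_hasFDerivAt x (hasDerivAt_pow (E-1) (x Ls)) ((pr Ls).hasFDerivAt))
  have h2 := h.const_mul c
  refine h2.congr_fderiv ?_
  ext w
  simp only [DW, ContinuousLinearMap.add_apply, ContinuousLinearMap.smul_apply, pr,
    ContinuousLinearMap.proj_apply, smul_eq_mul, Nat.sub_sub, Function.comp_apply, Function.comp]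
  ring

noncomputable def D2 (N : ℕ) (f : ℝ → ℝ) (k : Fin (N+3)) (x : Fin (N+3) → ℝ) :
    (Fin (N+3) → ℝ) →L[ℝ] ℝ :=
  (if iz = k then (deriv (deriv f) (x iz)) • pr iz else 0)
  + ∑ a : Fin (N+3), ∑ b : Fin (N+3),
    if (a:ℕ)+(b:ℕ)+2 ≤ N+3 then
      ((if a = k then DV b (N+1-(a:ℕ)-(b:ℕ)) x else 0)
       + (if b = k then DV a (N+1-(a:ℕ)-(b:ℕ)) x else 0)
       + (if Ls = k then DW a b (((N+1-(a:ℕ)-(b:ℕ):ℕ)):ℝ) (N+1-(a:ℕ)-(b:ℕ)) x else 0))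
    else 0

lemma hasFDerivAt_G (f : ℝ → ℝ) (hf : ContDiff ℝ 2 f) (k : Fin (N+3)) (x : Fin (N+3) → ℝ) :
    HasFDerivAt (G N f k) (D2 N f k x) x := by
  have hdf : ContDiff ℝ 1 (deriv f) := by
    have : (2 : WithTop ℕ∞) = 1 + 1 := by norm_num
    exact (contDiff_succ_iff_deriv.mp (this ▸ hf)).2.2
  apply HasFDerivAt.add
  · by_cases h : iz = k
    · simp only [if_pos h]
      exact HasDerivAt.comp_hasFDerivAt x
        ((hdf.differentiable one_ne_zero (x iz)).hasDerivAt) ((pr iz).hasFDerivAt)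
    · simp only [if_neg h]; exact hasFDerivAt_const 0 x
  · apply HasFDerivAt.fun_sum
    intro a _
    apply HasFDerivAt.fun_sum
    intro b _
    by_cases h : (a:ℕ)+(b:ℕ)+2 ≤ N+3
    · simp only [if_pos h]
      apply HasFDerivAt.add
      apply HasFDerivAt.add
      · by_cases h1 : a = k
        · simp only [if_pos h1]; exact hasFDerivAt_V b _ x
        · simp only [if_neg h1]; exact hasFDerivAt_const 0 x
      · by_cases h1 : b = k
        · simp only [if_pos h1]; exact hasFDerivAt_V a _ x
        · simp only [if_neg h1]; exact hasFDerivAt_const 0 x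
      · by_cases h1 : Ls = k
        · simp only [if_pos h1]; exact hasFDerivAt_W a b _ _ x
        · simp only [if_neg h1]; exact hasFDerivAt_const 0 x
    · simp only [if_neg h]; exact hasFDerivAt_const 0 x


lemma hasFDerivAt_proj (i : Fin (N+3)) (y : Fin (N+3) → ℝ) :
    HasFDerivAt (fun z : Fin (N+3) → ℝ => z i) (pr i) y := (pr i).hasFDerivAt

lemma hasFDerivAt_pow'' (i : Fin (N+3)) (E : ℕ) (y : Fin (N+3) → ℝ) :
    HasFDerivAt (fun z : Fin (N+3) → ℝ => (z i)^E) (((E:ℝ) * (y i)^(E-1)) • pr i) y := by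
  exact HasDerivAt.comp_hasFDerivAt y (hasDerivAt_pow E (y i)) (hasFDerivAt_proj i y)

lemma hasFDerivAt_mon (a b : Fin (N+3)) (E : ℕ) (y : Fin (N+3) → ℝ) :
    HasFDerivAt (fun z : Fin (N+3) → ℝ => z a * z b * (z Ls)^E)
      ((y b * (y Ls)^E) • pr a + (y a * (y Ls)^E) • pr b
        + (y a * y b * ((E:ℝ) * (y Ls)^(E-1))) • pr Ls) y := by
  have h := ((hasFDerivAt_proj a y).fun_mul (hasFDerivAt_proj b y)).fun_mul (hasFDerivAt_pow'' Ls E y)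
  refine h.congr_fderiv ?_
  ext w
  simp only [ContinuousLinearMap.add_apply, ContinuousLinearMap.smul_apply, pr,
    ContinuousLinearMap.proj_apply, smul_eq_mul, Function.comp_apply, Function.comp]
  ring

lemma hasFDerivAt_Phi0 (f : ℝ → ℝ) (hf : ContDiff ℝ 2 f) (y : Fin (N+3) → ℝ) :
    HasFDerivAt (Phi0 N f) (D1 N f y) y := by
  apply HasFDerivAt.add
  · exact HasDerivAt.comp_hasFDerivAt y
      ((hf.differentiable (by norm_num) (y iz)).hasDerivAt) (hasFDerivAt_proj iz y)
  · apply HasFDerivAt.fun_sum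
    intro a _
    apply HasFDerivAt.fun_sum
    intro b _
    by_cases h : (a:ℕ)+(b:ℕ)+2 ≤ N+3
    · simp only [if_pos h]
      exact hasFDerivAt_mon a b _ y
    · simp only [if_neg h]
      exact hasFDerivAt_const 0 y

lemma DV_single (b : Fin (N+3)) (E : ℕ) (x : Fin (N+3) → ℝ) (j : Fin (N+3)) :
    DV b E x (Pi.single j 1)
      = (if b = j then (x Ls)^E else 0) + (if Ls = j then x b * ((E:ℝ) * (x Ls)^(E-1)) else 0) := by
  simp [DV, pr, Pi.single_apply, mul_ite, mul_one, mul_zero]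

lemma DW_single (a b : Fin (N+3)) (c : ℝ) (E : ℕ) (x : Fin (N+3) → ℝ) (j : Fin (N+3)) :
    DW a b c E x (Pi.single j 1)
      = (if a = j then c * (x b * (x Ls)^(E-1)) else 0)
        + (if b = j then c * (x a * (x Ls)^(E-1)) else 0)
        + (if Ls = j then c * (x a * x b * (((E-1:ℕ):ℝ) * (x Ls)^(E-2))) else 0) := by
  simp [DW, pr, Pi.single_apply, mul_ite, mul_one, mul_zero]

set_option maxHeartbeats 1000000 in
lemma hess_entry (f : ℝ → ℝ) (hf : ContDiff ℝ 2 f) (x : Fin (N+3) → ℝ) (j k : Fin (N+3)) :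
    hess (Phi0 N f) x j k =
      (if iz = k then (if iz = j then deriv (deriv f) (x iz) else 0) else 0)
      + ∑ a : Fin (N+3), ∑ b : Fin (N+3),
        if (a:ℕ)+(b:ℕ)+2 ≤ N+3 then
          ((if a = k then ((if b = j then (x Ls)^(N+1-(a:ℕ)-(b:ℕ)) else 0)
              + (if Ls = j then x b * (((N+1-(a:ℕ)-(b:ℕ):ℕ):ℝ) * (x Ls)^(N-(a:ℕ)-(b:ℕ))) else 0)) else 0)
           + (if b = k then ((if a = j then (x Ls)^(N+1-(a:ℕ)-(b:ℕ)) else 0)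
              + (if Ls = j then x a * (((N+1-(a:ℕ)-(b:ℕ):ℕ):ℝ) * (x Ls)^(N-(a:ℕ)-(b:ℕ))) else 0)) else 0)
           + (if Ls = k then
                ((if a = j then ((N+1-(a:ℕ)-(b:ℕ):ℕ):ℝ) * (x b * (x Ls)^(N-(a:ℕ)-(b:ℕ))) else 0)
               + (if b = j then ((N+1-(a:ℕ)-(b:ℕ):ℕ):ℝ) * (x a * (x Ls)^(N-(a:ℕ)-(b:ℕ))) else 0)
               + (if Ls = j then ((N+1-(a:ℕ)-(b:ℕ):ℕ):ℝ) * (x a * x b * (((N-(a:ℕ)-(b:ℕ):ℕ):ℝ) * (x Ls)^(N-1-(a:ℕ)-(b:ℕ)))) else 0)) else 0))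
        else 0 := by
  have h1 : (fun y => fderiv ℝ (Phi0 N f) y (Pi.single k 1)) = G N f k :=
    funext fun y => by
      have hd := hasFDerivAt_Phi0 (N := N) f hf y
      rw [hd.fderiv]; exact D1_apply_single f k y
  show fderiv ℝ (fun y => fderiv ℝ (Phi0 N f) y (Pi.single k 1)) x (Pi.single j 1) = _
  rw [h1, (hasFDerivAt_G f hf k x).fderiv]
  rw [D2, ContinuousLinearMap.add_apply]
  congr 1
  · by_cases h : iz = k <;>
      simp [h, pr, Pi.single_apply]
  · rw [ContinuousLinearMap.coe_sum', Finset.sum_apply]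
    refine Finset.sum_congr rfl fun a _ => ?_
    rw [ContinuousLinearMap.coe_sum', Finset.sum_apply]
    refine Finset.sum_congr rfl fun b _ => ?_
    by_cases hab : (a:ℕ)+(b:ℕ)+2 ≤ N+3
    · simp only [if_pos hab]
      have e1 : N+1-(a:ℕ)-(b:ℕ)-1 = N-(a:ℕ)-(b:ℕ) := by omega
      have e2 : N+1-(a:ℕ)-(b:ℕ)-2 = N-1-(a:ℕ)-(b:ℕ) := by omega
      rw [ContinuousLinearMap.add_apply, ContinuousLinearMap.add_apply]
      congr 1
      · congr 1
        · by_cases h : a = k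
          · rw [if_pos h, if_pos h, DV_single, e1]
          · rw [if_neg h, if_neg h]; simp
        · by_cases h : b = k
          · rw [if_pos h, if_pos h, DV_single, e1]
          · rw [if_neg h, if_neg h]; simp
      · by_cases h : Ls = k
        · rw [if_pos h, if_pos h, DW_single, e1, e2]
        · rw [if_neg h, if_neg h]; simp
    · simp only [if_neg hab]
      simp

section helpers
variable {M : ℕ}

lemma ite_add_zero' (p : Prop) [Decidable p] (u v : ℝ) :
    (if p then u + v else 0) = (if p then u else 0) + (if p then v else 0) := by
  split <;> simp

lemma sum_deltaA (P : Fin M → Fin M → Prop) [∀ a b, Decidable (P a b)] (k : Fin M)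
    (F : Fin M → Fin M → ℝ) :
    (∑ a : Fin M, ∑ b : Fin M, if P a b then (if a = k then F a b else 0) else 0)
      = ∑ b : Fin M, if P k b then F k b else 0 := by
  have : ∀ a b, (if P a b then (if a = k then F a b else 0) else 0)
      = (if a = k then (if P a b then F a b else 0) else 0) := by
    intro a b; split_ifs <;> rfl
  simp only [this]
  rw [Finset.sum_comm]
  simp [Finset.sum_ite_eq']

lemma sum_deltaB (P : Fin M → Fin M → Prop) [∀ a b, Decidable (P a b)] (j : Fin M)
    (F : Fin M → Fin M → ℝ) :
    (∑ a : Fin M, ∑ b : Fin M, if P a b then (if b = j then F a b else 0) else 0)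
      = ∑ a : Fin M, if P a j then F a j else 0 := by
  have : ∀ a b, (if P a b then (if b = j then F a b else 0) else 0)
      = (if b = j then (if P a b then F a b else 0) else 0) := by
    intro a b; split_ifs <;> rfl
  simp only [this]
  simp [Finset.sum_ite_eq']

lemma sum_deltaAB (P : Fin M → Fin M → Prop) [∀ a b, Decidable (P a b)] (k j : Fin M)
    (F : Fin M → Fin M → ℝ) :
    (∑ a : Fin M, ∑ b : Fin M, if P a b then (if a = k then (if b = j then F a b else 0) else 0) else 0)
      = if P k j then F k j else 0 := by
  rw [sum_deltaA]
  have : ∀ b, (if P k b then (if b = j then F k b else 0) else 0)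
      = (if b = j then (if P k b then F k b else 0) else 0) := by
    intro b; split_ifs <;> rfl
  simp only [this]
  simp [Finset.sum_ite_eq']

end helpers

lemma sum_deltaBA (P : Fin M → Fin M → Prop) [∀ a b, Decidable (P a b)] (k j : Fin M)
    (F : Fin M → Fin M → ℝ) :
    (∑ a : Fin M, ∑ b : Fin M, if P a b then (if b = k then (if a = j then F a b else 0) else 0) else 0)
      = if P j k then F j k else 0 := by
  have : ∀ a b, (if P a b then (if b = k then (if a = j then F a b else 0) else 0) else 0)
      = (if P a b then (if a = j then (if b = k then F a b else 0) else 0) else 0) := by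
    intro a b; split_ifs <;> rfl
  simp only [this]
  rw [sum_deltaA]
  have : ∀ b, (if P j b then (if b = k then F j b else 0) else 0)
      = (if b = k then (if P j b then F j b else 0) else 0) := by
    intro b; split_ifs <;> rfl
  simp only [this]
  simp [Finset.sum_ite_eq']

noncomputable def Srow (N : ℕ) (x : Fin (N+3) → ℝ) (j : Fin (N+3)) : ℝ :=
  ∑ i : Fin (N+3), if (j:ℕ)+(i:ℕ)+2 ≤ N+3 then
    ((N+1-(j:ℕ)-(i:ℕ):ℕ):ℝ) * (x i * (x Ls)^(N-(j:ℕ)-(i:ℕ))) else 0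

noncomputable def Qd (N : ℕ) (x : Fin (N+3) → ℝ) : ℝ :=
  ∑ a : Fin (N+3), ∑ b : Fin (N+3), if (a:ℕ)+(b:ℕ)+2 ≤ N+3 then
    ((N+1-(a:ℕ)-(b:ℕ):ℕ):ℝ) * (x a * x b * (((N-(a:ℕ)-(b:ℕ):ℕ):ℝ) * (x Ls)^(N-1-(a:ℕ)-(b:ℕ)))) else 0

lemma neLs_of_val {j : Fin (N+3)} (hj : (j:ℕ) ≠ N+2) : ¬ (Ls (N := N) = j) := by
  intro h
  exact hj (by simpa [Ls] using (congrArg Fin.val h).symm)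

lemma entry_TL (f : ℝ → ℝ) (hf : ContDiff ℝ 2 f) (x : Fin (N+3) → ℝ) (j k : Fin (N+3))
    (hj : (j:ℕ) ≠ N+2) (hk : (k:ℕ) ≠ N+2) :
    hess (Phi0 N f) x j k =
      (if iz = k then (if iz = j then deriv (deriv f) (x iz) else 0) else 0)
      + (if (j:ℕ)+(k:ℕ)+2 ≤ N+3 then 2*(x Ls)^(N+1-(j:ℕ)-(k:ℕ)) else 0) := by
  rw [hess_entry f hf x j k]
  congr 1
  have hLj := neLs_of_val hj
  have hLk := neLs_of_val hk
  simp only [if_neg hLj, if_neg hLk, add_zero, zero_add]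
  simp only [ite_add_zero', Finset.sum_add_distrib]
  rw [sum_deltaAB (fun a b => (a:ℕ)+(b:ℕ)+2 ≤ N+3) k j,
    sum_deltaBA (fun a b => (a:ℕ)+(b:ℕ)+2 ≤ N+3) k j]
  by_cases h : (j:ℕ)+(k:ℕ)+2 ≤ N+3
  · rw [if_pos (by omega : (k:ℕ)+(j:ℕ)+2 ≤ N+3), if_pos h, if_pos h,
      show N+1-(k:ℕ)-(j:ℕ) = N+1-(j:ℕ)-(k:ℕ) from by omega]
    ring
  · rw [if_neg (by omega : ¬((k:ℕ)+(j:ℕ)+2 ≤ N+3)), if_neg h, if_neg h]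
    ring

lemma entry_col (f : ℝ → ℝ) (hf : ContDiff ℝ 2 f) (x : Fin (N+3) → ℝ) (j : Fin (N+3))
    (hj : (j:ℕ) ≠ N+2) :
    hess (Phi0 N f) x j Ls = 2 * Srow N x j := by
  rw [hess_entry f hf x j Ls]
  have hLj := neLs_of_val hj
  have hiz : ¬ (iz (N := N) = Ls (N := N)) := by
    intro h; have := congrArg Fin.val h; simp [iz, Ls] at this
  rw [if_neg hiz, zero_add]
  have key : (∑ a : Fin (N+3), ∑ b : Fin (N+3),
        if (a:ℕ)+(b:ℕ)+2 ≤ N+3 then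
          ((if a = Ls then ((if b = j then (x Ls)^(N+1-(a:ℕ)-(b:ℕ)) else 0)
              + (if Ls = j then x b * (((N+1-(a:ℕ)-(b:ℕ):ℕ):ℝ) * (x Ls)^(N-(a:ℕ)-(b:ℕ))) else 0)) else 0)
           + (if b = Ls then ((if a = j then (x Ls)^(N+1-(a:ℕ)-(b:ℕ)) else 0)
              + (if Ls = j then x a * (((N+1-(a:ℕ)-(b:ℕ):ℕ):ℝ) * (x Ls)^(N-(a:ℕ)-(b:ℕ))) else 0)) else 0)
           + (if (Ls : Fin (N+3)) = Ls then
                ((if a = j then ((N+1-(a:ℕ)-(b:ℕ):ℕ):ℝ) * (x b * (x Ls)^(N-(a:ℕ)-(b:ℕ))) else 0)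
               + (if b = j then ((N+1-(a:ℕ)-(b:ℕ):ℕ):ℝ) * (x a * (x Ls)^(N-(a:ℕ)-(b:ℕ))) else 0)
               + (if Ls = j then ((N+1-(a:ℕ)-(b:ℕ):ℕ):ℝ) * (x a * x b * (((N-(a:ℕ)-(b:ℕ):ℕ):ℝ) * (x Ls)^(N-1-(a:ℕ)-(b:ℕ)))) else 0)) else 0))
        else 0)
      = ∑ a : Fin (N+3), ∑ b : Fin (N+3),
        if (a:ℕ)+(b:ℕ)+2 ≤ N+3 then
          ((if a = j then ((N+1-(a:ℕ)-(b:ℕ):ℕ):ℝ) * (x b * (x Ls)^(N-(a:ℕ)-(b:ℕ))) else 0)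
           + (if b = j then ((N+1-(a:ℕ)-(b:ℕ):ℕ):ℝ) * (x a * (x Ls)^(N-(a:ℕ)-(b:ℕ))) else 0))
        else 0 := by
    refine Finset.sum_congr rfl fun a _ => Finset.sum_congr rfl fun b _ => ?_
    by_cases hab : (a:ℕ)+(b:ℕ)+2 ≤ N+3
    · rw [if_pos hab, if_pos hab]
      have ha : ¬ (a = Ls (N := N)) := by
        intro h; have := congrArg Fin.val h; simp [Ls] at this; omega
      have hb : ¬ (b = Ls (N := N)) := by
        intro h; have := congrArg Fin.val h; simp [Ls] at this; omega
      rw [if_neg ha, if_neg hb, if_pos rfl, if_neg hLj, zero_add, zero_add, add_zero]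
    · rw [if_neg hab, if_neg hab]
  rw [key]
  simp only [ite_add_zero', Finset.sum_add_distrib]
  rw [sum_deltaA (fun a b => (a:ℕ)+(b:ℕ)+2 ≤ N+3) j,
    sum_deltaB (fun a b => (a:ℕ)+(b:ℕ)+2 ≤ N+3) j]
  have h2 : (∑ a : Fin (N+3), if (a:ℕ)+(j:ℕ)+2 ≤ N+3 then
      ((N+1-(a:ℕ)-(j:ℕ):ℕ):ℝ) * (x a * (x Ls)^(N-(a:ℕ)-(j:ℕ))) else 0) = Srow N x j := by
    refine Finset.sum_congr rfl fun a _ => ?_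
    by_cases h : (a:ℕ)+(j:ℕ)+2 ≤ N+3
    · rw [if_pos h, if_pos (by omega : (j:ℕ)+(a:ℕ)+2 ≤ N+3),
        show N+1-(a:ℕ)-(j:ℕ) = N+1-(j:ℕ)-(a:ℕ) from by omega,
        show N-(a:ℕ)-(j:ℕ) = N-(j:ℕ)-(a:ℕ) from by omega]
    · rw [if_neg h, if_neg (by omega : ¬((j:ℕ)+(a:ℕ)+2 ≤ N+3))]
  rw [h2, Srow]
  ring

lemma entry_row (f : ℝ → ℝ) (hf : ContDiff ℝ 2 f) (x : Fin (N+3) → ℝ) (k : Fin (N+3))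
    (hk : (k:ℕ) ≠ N+2) :
    hess (Phi0 N f) x Ls k = 2 * Srow N x k := by
  rw [hess_entry f hf x Ls k]
  have hLk := neLs_of_val hk
  have hiz : ¬ (iz (N := N) = Ls (N := N)) := by
    intro h; have := congrArg Fin.val h; simp [iz, Ls] at this
  rw [show (if iz = k then (if iz = Ls (N := N) then deriv (deriv f) (x iz) else 0) else 0) = 0 by
    rw [if_neg hiz]; simp, zero_add]
  have key : (∑ a : Fin (N+3), ∑ b : Fin (N+3),
        if (a:ℕ)+(b:ℕ)+2 ≤ N+3 then
          ((if a = k then ((if b = Ls then (x Ls)^(N+1-(a:ℕ)-(b:ℕ)) else 0)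
              + (if (Ls : Fin (N+3)) = Ls then x b * (((N+1-(a:ℕ)-(b:ℕ):ℕ):ℝ) * (x Ls)^(N-(a:ℕ)-(b:ℕ))) else 0)) else 0)
           + (if b = k then ((if a = Ls then (x Ls)^(N+1-(a:ℕ)-(b:ℕ)) else 0)
              + (if (Ls : Fin (N+3)) = Ls then x a * (((N+1-(a:ℕ)-(b:ℕ):ℕ):ℝ) * (x Ls)^(N-(a:ℕ)-(b:ℕ))) else 0)) else 0)
           + (if Ls = k then
                ((if a = Ls then ((N+1-(a:ℕ)-(b:ℕ):ℕ):ℝ) * (x b * (x Ls)^(N-(a:ℕ)-(b:ℕ))) else 0)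
               + (if b = Ls then ((N+1-(a:ℕ)-(b:ℕ):ℕ):ℝ) * (x a * (x Ls)^(N-(a:ℕ)-(b:ℕ))) else 0)
               + (if (Ls : Fin (N+3)) = Ls then ((N+1-(a:ℕ)-(b:ℕ):ℕ):ℝ) * (x a * x b * (((N-(a:ℕ)-(b:ℕ):ℕ):ℝ) * (x Ls)^(N-1-(a:ℕ)-(b:ℕ)))) else 0)) else 0))
        else 0)
      = ∑ a : Fin (N+3), ∑ b : Fin (N+3),
        if (a:ℕ)+(b:ℕ)+2 ≤ N+3 then
          ((if a = k then x b * (((N+1-(a:ℕ)-(b:ℕ):ℕ):ℝ) * (x Ls)^(N-(a:ℕ)-(b:ℕ))) else 0)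
           + (if b = k then x a * (((N+1-(a:ℕ)-(b:ℕ):ℕ):ℝ) * (x Ls)^(N-(a:ℕ)-(b:ℕ))) else 0))
        else 0 := by
    refine Finset.sum_congr rfl fun a _ => Finset.sum_congr rfl fun b _ => ?_
    by_cases hab : (a:ℕ)+(b:ℕ)+2 ≤ N+3
    · rw [if_pos hab, if_pos hab]
      have ha : ¬ (a = Ls (N := N)) := by
        intro h; have := congrArg Fin.val h; simp [Ls] at this; omega
      have hb : ¬ (b = Ls (N := N)) := by
        intro h; have := congrArg Fin.val h; simp [Ls] at this; omega
      rw [if_neg ha, if_neg hb, if_neg hLk, if_pos rfl, if_pos rfl, zero_add, zero_add, add_zero]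
    · rw [if_neg hab, if_neg hab]
  rw [key]
  simp only [ite_add_zero', Finset.sum_add_distrib]
  rw [sum_deltaA (fun a b => (a:ℕ)+(b:ℕ)+2 ≤ N+3) k,
    sum_deltaB (fun a b => (a:ℕ)+(b:ℕ)+2 ≤ N+3) k]
  have h1 : (∑ b : Fin (N+3), if (k:ℕ)+(b:ℕ)+2 ≤ N+3 then
      x b * (((N+1-(k:ℕ)-(b:ℕ):ℕ):ℝ) * (x Ls)^(N-(k:ℕ)-(b:ℕ))) else 0) = Srow N x k := by
    refine Finset.sum_congr rfl fun b _ => ?_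
    by_cases h : (k:ℕ)+(b:ℕ)+2 ≤ N+3
    · rw [if_pos h, if_pos h]; ring
    · rw [if_neg h, if_neg h]
  have h2 : (∑ a : Fin (N+3), if (a:ℕ)+(k:ℕ)+2 ≤ N+3 then
      x a * (((N+1-(a:ℕ)-(k:ℕ):ℕ):ℝ) * (x Ls)^(N-(a:ℕ)-(k:ℕ))) else 0) = Srow N x k := by
    refine Finset.sum_congr rfl fun a _ => ?_
    by_cases h : (a:ℕ)+(k:ℕ)+2 ≤ N+3
    · rw [if_pos h, if_pos (by omega : (k:ℕ)+(a:ℕ)+2 ≤ N+3),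
        show N+1-(a:ℕ)-(k:ℕ) = N+1-(k:ℕ)-(a:ℕ) from by omega,
        show N-(a:ℕ)-(k:ℕ) = N-(k:ℕ)-(a:ℕ) from by omega]
      ring
    · rw [if_neg h, if_neg (by omega : ¬((k:ℕ)+(a:ℕ)+2 ≤ N+3))]
  rw [h1, h2]
  ring

lemma entry_LL (f : ℝ → ℝ) (hf : ContDiff ℝ 2 f) (x : Fin (N+3) → ℝ) :
    hess (Phi0 N f) x Ls Ls = Qd N x := by
  rw [hess_entry f hf x Ls Ls]
  have hiz : ¬ (iz (N := N) = Ls (N := N)) := by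
    intro h; have := congrArg Fin.val h; simp [iz, Ls] at this
  rw [if_neg hiz, zero_add]
  rw [Qd]
  refine Finset.sum_congr rfl fun a _ => Finset.sum_congr rfl fun b _ => ?_
  by_cases hab : (a:ℕ)+(b:ℕ)+2 ≤ N+3
  · rw [if_pos hab, if_pos hab]
    have ha : ¬ (a = Ls (N := N)) := by
      intro h; have := congrArg Fin.val h; simp [Ls] at this; omega
    have hb : ¬ (b = Ls (N := N)) := by
      intro h; have := congrArg Fin.val h; simp [Ls] at this; omega
    rw [if_neg ha, if_neg hb, if_pos rfl, if_pos rfl, if_neg ha, if_neg hb]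
    simp
  · rw [if_neg hab, if_neg hab]

lemma filter_interval (R a b : ℕ) (h : b < R) :
    Finset.filter (fun k => a < k ∧ k ≤ b) (Finset.range R) = Finset.Ico (a+1) (b+1) := by
  ext k; simp only [Finset.mem_filter, Finset.mem_range, Finset.mem_Ico]; omega

lemma key1 (R a b : ℕ) (c : ℝ) (h : b < R) :
    (∑ k ∈ Finset.range R, if a < k ∧ k ≤ b then c else 0) = ((b - a : ℕ) : ℝ) * c := by
  rw [Finset.sum_ite, Finset.sum_const_zero, add_zero, Finset.sum_const,
    filter_interval R a b h, Nat.card_Ico, nsmul_eq_mul]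
  congr 2
  omega

lemma key2_nat (R a b : ℕ) (h : b < R) :
    2 * (∑ k ∈ Finset.range R, if a < k ∧ k ≤ b then b - k else 0) = (b-a)*(b-a-1) := by
  rw [Finset.sum_ite, Finset.sum_const_zero, add_zero, filter_interval R a b h]
  have hbij : (∑ k ∈ Finset.Ico (a+1) (b+1), (b - k)) = ∑ r ∈ Finset.range (b-a), r := by
    apply Finset.sum_nbij' (i := fun k => b - k) (j := fun r => b - r)
    · intro k hk; simp only [Finset.mem_Ico] at hk; simp only [Finset.mem_range]; omega
    · intro r hr; simp only [Finset.mem_range] at hr; simp only [Finset.mem_Ico]; omega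
    · intro k hk; simp only [Finset.mem_Ico] at hk; omega
    · intro r hr; simp only [Finset.mem_range] at hr; omega
    · intro k hk; rfl
  rw [hbij]
  have := Finset.sum_range_id_mul_two (b-a)
  omega

lemma key2 (R a b : ℕ) (c : ℝ) (h : b < R) :
    2 * (∑ k ∈ Finset.range R, if a < k ∧ k ≤ b then ((b-k:ℕ):ℝ) * c else 0)
      = (((b-a)*(b-a-1) : ℕ):ℝ) * c := by
  have hc : ∀ k : ℕ, (if a < k ∧ k ≤ b then ((b-k:ℕ):ℝ) * c else 0)
      = (((if a < k ∧ k ≤ b then b-k else 0 : ℕ)):ℝ) * c := by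
    intro k; split_ifs <;> simp
  simp only [hc]
  rw [← Finset.sum_mul, ← Nat.cast_sum, ← key2_nat R a b h]
  push_cast
  ring

noncomputable def vK (N : ℕ) (x : Fin (N+3) → ℝ) : Fin (N+3) → ℝ := fun k =>
  if (k:ℕ) = N+2 then -1 else
    ∑ i : Fin (N+3), if (i:ℕ) < (k:ℕ) then x i * (x Ls)^((k:ℕ)-1-(i:ℕ)) else 0

lemma Ls_last : (Ls : Fin (N+3)) = Fin.last (N+2) := rfl

lemma row_j (f : ℝ → ℝ) (hf : ContDiff ℝ 2 f) (x : Fin (N+3) → ℝ) (j : Fin (N+3))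
    (hj : (j:ℕ) ≠ N+2) :
    ∑ k : Fin (N+3), hess (Phi0 N f) x j k * vK N x k = 0 := by
  rw [Fin.sum_univ_castSucc]
  have hvL : vK N x (Fin.last (N+2)) = -1 := by
    rw [vK]; simp
  have hL : hess (Phi0 N f) x (Fin.last (N+2) : Fin (N+3)) = hess (Phi0 N f) x Ls := rfl
  rw [hvL, ← Ls_last, entry_col f hf x j hj]
  have hterm : ∀ k' : Fin (N+2),
      hess (Phi0 N f) x j k'.castSucc * vK N x k'.castSucc
        = (if (j:ℕ)+(k':ℕ)+2 ≤ N+3 then 2*(x Ls)^(N+1-(j:ℕ)-(k':ℕ)) else 0)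
            * (∑ i : Fin (N+3), if (i:ℕ) < (k':ℕ) then x i * (x Ls)^((k':ℕ)-1-(i:ℕ)) else 0)
        + (if iz = k'.castSucc then (if iz = j then deriv (deriv f) (x iz) else 0) else 0)
            * (∑ i : Fin (N+3), if (i:ℕ) < (k':ℕ) then x i * (x Ls)^((k':ℕ)-1-(i:ℕ)) else 0) := by
    intro k'
    have hk' : ((k'.castSucc : Fin (N+3)):ℕ) ≠ N+2 := by
      simp only [Fin.coe_castSucc]; omega
    rw [entry_TL f hf x j k'.castSucc hj hk', vK, if_neg hk']
    simp only [Fin.coe_castSucc]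
    ring
  rw [Finset.sum_congr rfl fun k' _ => hterm k', Finset.sum_add_distrib]
  have hzero : (∑ k' : Fin (N+2),
      (if iz = k'.castSucc then (if iz = j then deriv (deriv f) (x iz) else 0) else 0)
        * (∑ i : Fin (N+3), if (i:ℕ) < (k':ℕ) then x i * (x Ls)^((k':ℕ)-1-(i:ℕ)) else 0)) = 0 := by
    apply Finset.sum_eq_zero
    intro k' _
    by_cases h : iz = k'.castSucc
    · have hk0 : (k':ℕ) = 0 := by
        have := congrArg Fin.val h; simpa [iz] using this.symm
      have : (∑ i : Fin (N+3), if (i:ℕ) < (k':ℕ) then x i * (x Ls)^((k':ℕ)-1-(i:ℕ)) else 0) = 0 := by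
        apply Finset.sum_eq_zero; intro i _; rw [if_neg (by omega)]
      rw [this, mul_zero]
    · rw [if_neg h, zero_mul]
  rw [hzero, add_zero]
  have hmain : (∑ k' : Fin (N+2),
      (if (j:ℕ)+(k':ℕ)+2 ≤ N+3 then 2*(x Ls)^(N+1-(j:ℕ)-(k':ℕ)) else 0)
        * (∑ i : Fin (N+3), if (i:ℕ) < (k':ℕ) then x i * (x Ls)^((k':ℕ)-1-(i:ℕ)) else 0))
      = 2 * Srow N x j := by
    have expand : ∀ k' : Fin (N+2),
        (if (j:ℕ)+(k':ℕ)+2 ≤ N+3 then 2*(x Ls)^(N+1-(j:ℕ)-(k':ℕ)) else 0)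
          * (∑ i : Fin (N+3), if (i:ℕ) < (k':ℕ) then x i * (x Ls)^((k':ℕ)-1-(i:ℕ)) else 0)
        = ∑ i : Fin (N+3), if (i:ℕ) < (k':ℕ) ∧ (k':ℕ) ≤ N+1-(j:ℕ) then
            2 * (x i * (x Ls)^(N-(j:ℕ)-(i:ℕ))) else 0 := by
      intro k'
      have hjb : (j:ℕ) < N+3 := j.isLt
      have hkb : (k':ℕ) < N+2 := k'.isLt
      rw [Finset.mul_sum]
      refine Finset.sum_congr rfl fun i _ => ?_
      by_cases h1 : (j:ℕ)+(k':ℕ)+2 ≤ N+3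
      · rw [if_pos h1]
        by_cases h2 : (i:ℕ) < (k':ℕ)
        · rw [if_pos h2, if_pos (show (i:ℕ) < (k':ℕ) ∧ (k':ℕ) ≤ N+1-(j:ℕ) from ⟨h2, by omega⟩),
            show N-(j:ℕ)-(i:ℕ) = (N+1-(j:ℕ)-(k':ℕ)) + ((k':ℕ)-1-(i:ℕ)) from by omega,
            pow_add]
          ring
        · rw [if_neg h2,
            if_neg (show ¬((i:ℕ) < (k':ℕ) ∧ (k':ℕ) ≤ N+1-(j:ℕ)) from by omega), mul_zero]
      · rw [if_neg h1,
          if_neg (show ¬((i:ℕ) < (k':ℕ) ∧ (k':ℕ) ≤ N+1-(j:ℕ)) from by omega), zero_mul]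
    rw [Finset.sum_congr rfl fun k' _ => expand k', Finset.sum_comm]
    rw [Srow, Finset.mul_sum]
    refine Finset.sum_congr rfl fun i _ => ?_
    have convrange : (∑ k' : Fin (N+2), if (i:ℕ) < (k':ℕ) ∧ (k':ℕ) ≤ N+1-(j:ℕ) then
        2 * (x i * (x Ls)^(N-(j:ℕ)-(i:ℕ))) else 0)
        = ∑ K ∈ Finset.range (N+2), if (i:ℕ) < K ∧ K ≤ N+1-(j:ℕ) then
            2 * (x i * (x Ls)^(N-(j:ℕ)-(i:ℕ))) else 0 :=
      Fin.sum_univ_eq_sum_range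
        (fun K => if (i:ℕ) < K ∧ K ≤ N+1-(j:ℕ) then 2*(x i * (x Ls)^(N-(j:ℕ)-(i:ℕ))) else 0) (N+2)
    rw [convrange, key1 (N+2) (i:ℕ) (N+1-(j:ℕ)) _ (by omega)]
    by_cases h : (j:ℕ)+(i:ℕ)+2 ≤ N+3
    · rw [if_pos h, show N+1-(j:ℕ)-(i:ℕ) = N+1-(j:ℕ)-(i:ℕ) from rfl]
      ring
    · rw [if_neg h, show N+1-(j:ℕ)-(i:ℕ) = 0 from by omega]
      simp
  rw [hmain]
  ring

lemma key2' (R a b : ℕ) (c : ℝ) (h : b < R) :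
    (∑ k ∈ Finset.range R, if a < k ∧ k ≤ b then ((b-k:ℕ):ℝ) * (2*c) else 0)
      = (((b-a)*(b-a-1) : ℕ):ℝ) * c := by
  have : ∀ k, (if a < k ∧ k ≤ b then ((b-k:ℕ):ℝ) * (2*c) else 0)
      = 2 * (if a < k ∧ k ≤ b then ((b-k:ℕ):ℝ) * c else 0) := by
    intro k; split_ifs <;> ring
  simp only [this]
  rw [← Finset.mul_sum, key2 R a b c h]

lemma row_L (f : ℝ → ℝ) (hf : ContDiff ℝ 2 f) (x : Fin (N+3) → ℝ) :
    ∑ k : Fin (N+3), hess (Phi0 N f) x Ls k * vK N x k = 0 := by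
  rw [Fin.sum_univ_castSucc]
  have hvL : vK N x (Fin.last (N+2)) = -1 := by rw [vK]; simp
  rw [hvL, ← Ls_last, entry_LL f hf x]
  have hterm : ∀ k' : Fin (N+2),
      hess (Phi0 N f) x Ls k'.castSucc * vK N x k'.castSucc
        = (2 * Srow N x k'.castSucc)
            * (∑ p : Fin (N+3), if (p:ℕ) < (k':ℕ) then x p * (x Ls)^((k':ℕ)-1-(p:ℕ)) else 0) := by
    intro k'
    have hk' : ((k'.castSucc : Fin (N+3)):ℕ) ≠ N+2 := by
      simp only [Fin.coe_castSucc]; omega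
    rw [entry_row f hf x k'.castSucc hk', vK, if_neg hk']
    simp only [Fin.coe_castSucc]
  rw [Finset.sum_congr rfl fun k' _ => hterm k']
  have expand : ∀ k' : Fin (N+2),
      (2 * Srow N x k'.castSucc)
          * (∑ p : Fin (N+3), if (p:ℕ) < (k':ℕ) then x p * (x Ls)^((k':ℕ)-1-(p:ℕ)) else 0)
        = ∑ i : Fin (N+3), ∑ p : Fin (N+3),
            if (p:ℕ) < (k':ℕ) ∧ (k':ℕ) ≤ N+1-(i:ℕ) then
              (((N+1-(i:ℕ))-(k':ℕ) : ℕ):ℝ)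
                * (2 * (x i * (x p * (x Ls)^(N-1-(i:ℕ)-(p:ℕ))))) else 0 := by
    intro k'
    have hkb : (k':ℕ) < N+2 := k'.isLt
    rw [Srow, mul_assoc, Finset.sum_mul_sum, Finset.mul_sum]
    refine Finset.sum_congr rfl fun i _ => ?_
    rw [Finset.mul_sum]
    refine Finset.sum_congr rfl fun p _ => ?_
    simp only [Fin.coe_castSucc]
    by_cases c1 : (k':ℕ)+(i:ℕ)+2 ≤ N+3
    · rw [if_pos c1]
      by_cases c2 : (p:ℕ) < (k':ℕ)
      · rw [if_pos c2, if_pos (show (p:ℕ) < (k':ℕ) ∧ (k':ℕ) ≤ N+1-(i:ℕ) from ⟨c2, by omega⟩)]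
        by_cases c3 : (k':ℕ)+(i:ℕ) ≤ N
        · rw [show N-1-(i:ℕ)-(p:ℕ) = (N-(k':ℕ)-(i:ℕ)) + ((k':ℕ)-1-(p:ℕ)) from by omega,
            pow_add, show (N+1-(i:ℕ))-(k':ℕ) = N+1-(k':ℕ)-(i:ℕ) from by omega]
          ring
        · rw [show N+1-(k':ℕ)-(i:ℕ) = 0 from by omega,
            show (N+1-(i:ℕ))-(k':ℕ) = 0 from by omega]
          simp
      · rw [if_neg c2,
          if_neg (show ¬((p:ℕ) < (k':ℕ) ∧ (k':ℕ) ≤ N+1-(i:ℕ)) from by omega)]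
        ring
    · rw [if_neg c1,
        if_neg (show ¬((p:ℕ) < (k':ℕ) ∧ (k':ℕ) ≤ N+1-(i:ℕ)) from by omega)]
      ring
  rw [Finset.sum_congr rfl fun k' _ => expand k', Finset.sum_comm]
  have swap2 : ∀ i : Fin (N+3),
      (∑ k' : Fin (N+2), ∑ p : Fin (N+3),
        if (p:ℕ) < (k':ℕ) ∧ (k':ℕ) ≤ N+1-(i:ℕ) then
          (((N+1-(i:ℕ))-(k':ℕ) : ℕ):ℝ)
            * (2 * (x i * (x p * (x Ls)^(N-1-(i:ℕ)-(p:ℕ))))) else 0)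
      = ∑ p : Fin (N+3), ∑ k' : Fin (N+2),
          if (p:ℕ) < (k':ℕ) ∧ (k':ℕ) ≤ N+1-(i:ℕ) then
            (((N+1-(i:ℕ))-(k':ℕ) : ℕ):ℝ)
              * (2 * (x i * (x p * (x Ls)^(N-1-(i:ℕ)-(p:ℕ))))) else 0 := by
    intro i; exact Finset.sum_comm
  rw [Finset.sum_congr rfl fun i _ => swap2 i, Qd]
  have final : ∀ (i p : Fin (N+3)),
      (∑ k' : Fin (N+2), if (p:ℕ) < (k':ℕ) ∧ (k':ℕ) ≤ N+1-(i:ℕ) then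
          (((N+1-(i:ℕ))-(k':ℕ) : ℕ):ℝ)
            * (2 * (x i * (x p * (x Ls)^(N-1-(i:ℕ)-(p:ℕ))))) else 0)
      = (if (i:ℕ)+(p:ℕ)+2 ≤ N+3 then
          ((N+1-(i:ℕ)-(p:ℕ):ℕ):ℝ) * (x i * x p * (((N-(i:ℕ)-(p:ℕ):ℕ):ℝ) * (x Ls)^(N-1-(i:ℕ)-(p:ℕ)))) else 0) := by
    intro i p
    have conv : (∑ k' : Fin (N+2), if (p:ℕ) < (k':ℕ) ∧ (k':ℕ) ≤ N+1-(i:ℕ) then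
          (((N+1-(i:ℕ))-(k':ℕ) : ℕ):ℝ)
            * (2 * (x i * (x p * (x Ls)^(N-1-(i:ℕ)-(p:ℕ))))) else 0)
        = ∑ K ∈ Finset.range (N+2), if (p:ℕ) < K ∧ K ≤ N+1-(i:ℕ) then
          (((N+1-(i:ℕ))-K : ℕ):ℝ)
            * (2 * (x i * (x p * (x Ls)^(N-1-(i:ℕ)-(p:ℕ))))) else 0 :=
      Fin.sum_univ_eq_sum_range
        (fun K => if (p:ℕ) < K ∧ K ≤ N+1-(i:ℕ) then
          (((N+1-(i:ℕ))-K : ℕ):ℝ)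
            * (2 * (x i * (x p * (x Ls)^(N-1-(i:ℕ)-(p:ℕ))))) else 0) (N+2)
    rw [conv, key2' (N+2) (p:ℕ) (N+1-(i:ℕ)) _ (by omega)]
    by_cases h : (i:ℕ)+(p:ℕ)+2 ≤ N+3
    · rw [if_pos h]
      rw [show (N+1-(i:ℕ)-(p:ℕ))-1 = N-(i:ℕ)-(p:ℕ) from by omega, Nat.cast_mul]
      ring
    · rw [if_neg h, show N+1-(i:ℕ)-(p:ℕ) = 0 from by omega]
      simp [show (N+1-(i:ℕ))-(p:ℕ) = 0 from by omega]
  rw [Finset.sum_congr rfl fun i _ => Finset.sum_congr rfl fun p _ => final i p]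
  ring

lemma mulVec_vK (f : ℝ → ℝ) (hf : ContDiff ℝ 2 f) (x : Fin (N+3) → ℝ) :
    (hess (Phi0 N f) x).mulVec (vK N x) = 0 := by
  funext j
  show ∑ k : Fin (N+3), hess (Phi0 N f) x j k * vK N x k = 0
  by_cases hj : (j:ℕ) = N+2
  · have : j = Ls := by apply Fin.val_injective; simpa [Ls] using hj
    rw [this]; exact row_L f hf x
  · exact row_j f hf x j hj

noncomputable def Bmat (N : ℕ) (f : ℝ → ℝ) (x : Fin (N+3) → ℝ) :
    Matrix (Fin (N+2)) (Fin (N+2)) ℝ :=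
  fun a b => hess (Phi0 N f) x a.castSucc b.castSucc

lemma Bmat_det_ne_zero (f : ℝ → ℝ) (hf : ContDiff ℝ 2 f) (x : Fin (N+3) → ℝ) :
    (Bmat N f x).det ≠ 0 := by
  set C : Matrix (Fin (N+2)) (Fin (N+2)) ℝ := (Bmat N f x).submatrix (⇑(Fin.revPerm)) id with hC
  have hCentry : ∀ a b : Fin (N+2), C a b = hess (Phi0 N f) x (Fin.rev a).castSucc b.castSucc := by
    intro a b; rfl
  have htri : C.BlockTriangular (⇑OrderDual.toDual) := by
    intro a b hab
    have hlt : a < b := hab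
    have hva : ((Fin.rev a : Fin (N+2)):ℕ) = N+1-(a:ℕ) := by
      rw [Fin.val_rev]; omega
    rw [hCentry, entry_TL f hf x _ _ (by simp [hva]; omega) (by simp; omega)]
    have h1 : ¬ (iz (N := N) = ((Fin.rev a).castSucc : Fin (N+3))) := by
      intro h
      have := congrArg Fin.val h
      simp [iz, hva] at this
      omega
    have h2 : ¬ (((Fin.rev a).castSucc : Fin (N+3)):ℕ) + ((b.castSucc : Fin (N+3)):ℕ) + 2 ≤ N+3 := by
      simp [hva]
      omega
    rw [if_neg h2]
    simp [h1]
  have hdiag : ∀ a : Fin (N+2), C a a = 2 := by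
    intro a
    have hva : ((Fin.rev a : Fin (N+2)):ℕ) = N+1-(a:ℕ) := by
      rw [Fin.val_rev]; omega
    rw [hCentry, entry_TL f hf x _ _ (by simp [hva]; omega) (by simp; omega)]
    have h1 : ¬ (iz (N := N) = ((Fin.rev a).castSucc : Fin (N+3))) ∨
        ¬ (iz (N := N) = (a.castSucc : Fin (N+3))) := by
      by_cases h : (a:ℕ) = 0
      · left; intro hh
        have := congrArg Fin.val hh
        simp [iz, hva] at this
        omega
      · right; intro hh
        have := congrArg Fin.val hh
        simp [iz] at this
        omega
    have h2 : (((Fin.rev a).castSucc : Fin (N+3)):ℕ) + ((a.castSucc : Fin (N+3)):ℕ) + 2 ≤ N+3 := by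
      simp [hva]; omega
    have h3 : N+1-(((Fin.rev a).castSucc : Fin (N+3)):ℕ)-((a.castSucc : Fin (N+3)):ℕ) = 0 := by
      simp [hva]; omega
    rw [if_pos h2, h3, pow_zero, mul_one]
    rcases h1 with h1 | h1
    · simp [h1]
    · rw [if_neg h1, zero_add]
  have hdetC : C.det = 2^(N+2) := by
    rw [Matrix.det_of_lowerTriangular C htri]
    simp only [hdiag]
    rw [Finset.prod_const]
    simp
  have hperm := Matrix.det_permute (Fin.revPerm) (Bmat N f x)
  intro h
  rw [← hC] at hperm
  rw [h, mul_zero] at hperm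
  rw [hperm] at hdetC
  exact (by positivity : (0:ℝ) < 2^(N+2)).ne' hdetC.symm

lemma vK_ne_zero (x : Fin (N+3) → ℝ) : vK N x ≠ 0 := by
  intro h
  have := congrFun h Ls
  rw [vK] at this
  simp [Ls] at this

lemma ker_eq_span (f : ℝ → ℝ) (hf : ContDiff ℝ 2 f) (x : Fin (N+3) → ℝ) :
    LinearMap.ker (hess (Phi0 N f) x).mulVecLin = Submodule.span ℝ {vK N x} := by
  apply le_antisymm
  · intro w hw
    rw [LinearMap.mem_ker, Matrix.mulVecLin_apply] at hw
    set u : Fin (N+3) → ℝ := w + (w Ls) • vK N x with hu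
    have hmu : (hess (Phi0 N f) x).mulVec u = 0 := by
      rw [hu, Matrix.mulVec_add, hw, Matrix.mulVec_smul, mulVec_vK f hf x]
      simp
    have hvL : vK N x Ls = -1 := by rw [vK]; simp [Ls]
    have huL : u Ls = 0 := by
      rw [hu]
      simp [hvL]
    have hu' : ∀ b : Fin (N+2), u b.castSucc = 0 := by
      set u' : Fin (N+2) → ℝ := fun b => u b.castSucc with hu'def
      have hBu : (Bmat N f x).mulVec u' = 0 := by
        funext a
        have h0 : (hess (Phi0 N f) x).mulVec u a.castSucc = 0 := by rw [hmu]; rfl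
        rw [show ((hess (Phi0 N f) x).mulVec u) a.castSucc
            = ∑ k : Fin (N+3), hess (Phi0 N f) x a.castSucc k * u k from rfl,
          Fin.sum_univ_castSucc, ← Ls_last, huL, mul_zero, add_zero] at h0
        exact h0
      have hz : u' = 0 := by
        have hunit : IsUnit (Bmat N f x).det := isUnit_iff_ne_zero.mpr (Bmat_det_ne_zero f hf x)
        have h2 := congrArg (fun z => (Bmat N f x)⁻¹.mulVec z) hBu
        simpa [Matrix.mulVec_mulVec, Matrix.nonsing_inv_mul _ hunit, Matrix.one_mulVec] using h2
      intro b
      exact congrFun hz b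
    have huz : u = 0 := by
      funext k
      induction k using Fin.lastCases with
      | last => rw [← Ls_last]; exact huL
      | cast b => exact hu' b
    have hwv : w = (-(w Ls)) • vK N x := by
      have h3 : w + (w Ls) • vK N x = 0 := by rw [← hu, huz]
      have := eq_neg_of_add_eq_zero_left h3
      rw [neg_smul]
      exact this
    rw [hwv]
    exact Submodule.smul_mem _ _ (Submodule.mem_span_singleton_self _)
  · rw [Submodule.span_le, Set.singleton_subset_iff]
    rw [SetLike.mem_coe, LinearMap.mem_ker, Matrix.mulVecLin_apply]
    exact mulVec_vK f hf x

theorem main_aux (N : ℕ) (f : ℝ → ℝ) (hf : ContDiff ℝ 2 f) (x : Fin (N+3) → ℝ) :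
    (hess (Phi0 N f) x).rank = N+2 ∧
      Module.finrank ℝ (LinearMap.ker (hess (Phi0 N f) x).mulVecLin) = 1 := by
  have hker1 : Module.finrank ℝ (LinearMap.ker (hess (Phi0 N f) x).mulVecLin) = 1 := by
    rw [ker_eq_span f hf x]
    exact finrank_span_singleton (vK_ne_zero x)
  refine ⟨?_, hker1⟩
  have hrn := LinearMap.finrank_range_add_finrank_ker (hess (Phi0 N f) x).mulVecLin
  rw [hker1, Module.finrank_fintype_fun_eq_card, Fintype.card_fin] at hrn
  rw [Matrix.rank]
  omega


/-- For `n ≥ 3` and a twice differentiable `f : ℝ → ℝ`, the Hessian of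
`Φ(x) = f(x_1) + Σ_{0<j<j+k≤n} x_j x_k x_n^{n-j-k}` has rank exactly `n-1`
at every point of `ℝⁿ`; in particular its kernel is one-dimensional
everywhere.  Indices are 0-based: coordinate `i : Fin n` is `x_{i+1}`. -/
theorem hessian_rank_eq (n : ℕ) (hn : 3 ≤ n) (f : ℝ → ℝ) (hf : ContDiff ℝ 2 f)
    (Φ : (Fin n → ℝ) → ℝ)
    (hΦ : Φ = fun x => f (x ⟨0, by omega⟩) + ∑ j : Fin n, ∑ k : Fin n,
      if (j : ℕ) + (k : ℕ) + 2 ≤ n then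
        x j * x k * (x ⟨n - 1, by omega⟩) ^ (n - 2 - (j : ℕ) - (k : ℕ)) else 0) :
    ∀ x : Fin n → ℝ, (hess Φ x).rank = n - 1 ∧
      Module.finrank ℝ (LinearMap.ker (hess Φ x).mulVecLin) = 1 := by
  obtain ⟨N, rfl⟩ : ∃ N, n = N + 3 := ⟨n - 3, by omega⟩
  have hPhi : Φ = Phi0 N f := by
    rw [hΦ]
    funext z
    simp only [Phi0]
    congr 1
  intro x
  rw [hPhi]
  have h := main_aux N f hf x
  exact ⟨by rw [show N+3-1 = N+2 from by omega]; exact h.1, h.2⟩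
end

section
/- If a, b, c are real (or complex) constants and μ ≥ 2 is an integer such that a·x·Re(z^{μ+1}) - b·Re(z^{μ+2}) = c·x^{μ+2} for all z = x+iy ∈ ℂ, then c = 0. -/
open Polynomial Complex

lemma eval_zero_forall {p : Polynomial ℂ} (h : ∀ x : ℝ, p.eval (x : ℂ) = 0) :
    ∀ z : ℂ, p.eval z = 0 := by
  have hp : p = 0 := by
    apply Polynomial.eq_zero_of_infinite_isRoot
    apply Set.Infinite.mono (s := Set.range ((↑) : ℝ → ℂ))
    · rintro _ ⟨x, rfl⟩; exact h x
    · exact Set.infinite_range_of_injective Complex.ofReal_injective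
  simp [hp]

/-- If `a·x·Re(z^{μ+1}) - b·Re(z^{μ+2}) = c·x^{μ+2}` identically on `ℂ`
(where `z = x + iy`, `x = Re z`) with `μ ≥ 2`, then `c = 0`. -/
theorem harmonic_identity_forces_zero (μ : ℕ) (hμ : 2 ≤ μ) (a b c : ℝ)
    (h : ∀ z : ℂ, a * z.re * (z ^ (μ + 1)).re - b * (z ^ (μ + 2)).re
      = c * z.re ^ (μ + 2)) :
    c = 0 := by
  set g : ℂ → ℂ → ℂ := fun u v =>
    (a : ℂ)/2 * u * ((u + I*v)^(μ+1) + (u - I*v)^(μ+1))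
      - (b : ℂ)/2 * ((u + I*v)^(μ+2) + (u - I*v)^(μ+2)) - (c : ℂ) * u^(μ+2) with hg
  have h0 : ∀ x y : ℝ, g x y = 0 := by
    intro x y
    have hz := h ((x : ℂ) + (y : ℂ)*I)
    have hre : ((x : ℂ) + (y : ℂ)*I).re = x := by simp
    rw [hre] at hz
    have key : ∀ n : ℕ, ((x:ℂ) + (y:ℂ)*I)^n + ((x:ℂ) - (y:ℂ)*I)^n
        = 2 * ((((x:ℂ) + (y:ℂ)*I)^n).re : ℂ) := by
      intro n
      have hc : ((x:ℂ) - (y:ℂ)*I) = starRingEnd ℂ ((x:ℂ) + (y:ℂ)*I) := by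
        simp [Complex.ext_iff]
      rw [hc, ← map_pow, Complex.add_conj]
      push_cast; ring
    have := hz
    rw [hg]
    simp only
    rw [show (x:ℂ) + I*(y:ℂ) = (x:ℂ) + (y:ℂ)*I by ring,
        show (x:ℂ) - I*(y:ℂ) = (x:ℂ) - (y:ℂ)*I by ring, key, key]
    rw [show (a:ℂ)/2 * (x:ℂ) * (2 * ((((x:ℂ)+(y:ℂ)*I)^(μ+1)).re : ℂ))
        - (b:ℂ)/2 * (2 * ((((x:ℂ)+(y:ℂ)*I)^(μ+2)).re : ℂ)) - (c:ℂ)*(x:ℂ)^(μ+2)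
        = ((a * x * ((((x:ℂ)+(y:ℂ)*I)^(μ+1)).re) - b * ((((x:ℂ)+(y:ℂ)*I)^(μ+2)).re)
            - c * x^(μ+2) : ℝ) : ℂ) by push_cast; ring, hz]
    push_cast; ring
  have h1 : ∀ (x : ℝ) (v : ℂ), g x v = 0 := by
    intro x
    set p : Polynomial ℂ :=
      C ((a:ℂ)/2 * x) * ((C (x:ℂ) + C I * X)^(μ+1) + (C (x:ℂ) - C I * X)^(μ+1))
        - C ((b:ℂ)/2) * ((C (x:ℂ) + C I * X)^(μ+2) + (C (x:ℂ) - C I * X)^(μ+2))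
        - C ((c:ℂ) * (x:ℂ)^(μ+2)) with hp
    have hev : ∀ v : ℂ, p.eval v = g x v := by
      intro v; rw [hp, hg]; simp
    intro v
    rw [← hev]
    apply eval_zero_forall
    intro y; rw [hev]; exact h0 x y
  have h2 : ∀ u v : ℂ, g u v = 0 := by
    intro u v
    set q : Polynomial ℂ :=
      C ((a:ℂ)/2) * X * ((X + C (I*v))^(μ+1) + (X - C (I*v))^(μ+1))
        - C ((b:ℂ)/2) * ((X + C (I*v))^(μ+2) + (X - C (I*v))^(μ+2))
        - C (c:ℂ) * X^(μ+2) with hq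
    have hev : ∀ u : ℂ, q.eval u = g u v := by
      intro u; rw [hq, hg]; simp
    rw [← hev]
    apply eval_zero_forall
    intro x; rw [hev]; exact h1 x v
  -- substitute u = (1+t)/2, v = (1-t)/(2I)
  have h3 : ∀ t : ℂ, (a:ℂ)/4 * ((1+t) * (1 + t^(μ+1)))
      - (b:ℂ)/2 * (1 + t^(μ+2)) - (c:ℂ)/2^(μ+2) * (1+t)^(μ+2) = 0 := by
    intro t
    have := h2 ((1+t)/2) ((1-t)/(2*I))
    rw [hg] at this
    simp only at this
    have hI1 : (1+t)/2 + I * ((1-t)/(2*I)) = 1 := by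
      field_simp
      ring
    have hI2 : (1+t)/2 - I * ((1-t)/(2*I)) = t := by
      field_simp
      ring
    rw [hI1, hI2] at this
    rw [← this]
    rw [div_pow]
    ring_nf
  -- convert to polynomial identity over ℂ
  set Q : Polynomial ℂ :=
    C ((a:ℂ)/4) * ((1+X) * (1+X^(μ+1))) - C ((b:ℂ)/2) * (1+X^(μ+2))
      - C ((c:ℂ)/2^(μ+2)) * (1+X)^(μ+2) with hQdef
  have hQ0 : Q = 0 := by
    apply Polynomial.funext
    intro t
    rw [hQdef]
    simpa using h3 t
  have hco := congrArg (fun p => Polynomial.coeff p 2) hQ0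
  simp only [hQdef, coeff_sub, coeff_zero] at hco
  have e1 : ((1+X : Polynomial ℂ) * (1+X^(μ+1))).coeff 2 = 0 := by
    have : (1+X : Polynomial ℂ) * (1+X^(μ+1)) = 1 + X + X^(μ+1) + X^(μ+1) * X := by ring
    rw [this, ← pow_succ]
    simp only [coeff_add, coeff_one, coeff_X, coeff_X_pow]
    have h1' : μ ≠ 1 := by omega
    have h2' : μ ≠ 0 := by omega
    simp [h1', h2']
  have e2 : ((1 : Polynomial ℂ)+X^(μ+2)).coeff 2 = 0 := by
    simp only [coeff_add, coeff_one, coeff_X_pow]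
    have h2' : μ ≠ 0 := by omega
    simp [h2']
  have e3 : ((1+X : Polynomial ℂ)^(μ+2)).coeff 2 = ((μ+2).choose 2 : ℂ) := by
    rw [add_comm]
    rw [Polynomial.coeff_X_add_one_pow]
  rw [coeff_C_mul, coeff_C_mul, coeff_C_mul, e1, e2, e3] at hco
  simp only [mul_zero, sub_zero, zero_sub, neg_eq_zero, mul_eq_zero] at hco
  have hch : ((μ+2).choose 2 : ℂ) ≠ 0 := by
    simp only [ne_eq, Nat.cast_eq_zero]
    have := Nat.choose_pos (show 2 ≤ μ + 2 by omega)
    omega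
  have h2p : ((2:ℂ)^(μ+2)) ≠ 0 := pow_ne_zero _ two_ne_zero
  rcases hco with hco | hco
  · field_simp at hco
    simpa using hco
  · exact absurd hco hch
end

section
/- Let n ≥ 3 and let P(x_1,…,x_{n-1},s) = Σ_{0<j<j+k≤n} x_j x_k s^{n-j-k}. The real vector field which is the real part of X'_{-1} = 2∂/∂ζ + Σ_{j=2}^{n-1}(2j-2-n) z_{j-1} ∂/∂z_j is tangent to the hypersurface M_0 = {(w,z,ζ) ∈ ℂ^{n+1} : Re(w) = P(Re z_1,…,Re z_{n-1}, Re ζ)}; i.e., applying Re(X'_{-1}) to the defining function Re(w) - P(Re z, Re ζ) gives a function vanishing on M_0 (in fact vanishing identically). -/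
open scoped BigOperators

/-- Index `k` as an element of `Fin (n+1)` (coordinates `(w, z_1, …, z_{n-1}, ζ)`
of `ℂ^{n+1}`: `w` is index `0`, `z_j` is index `j`, `ζ` is index `n`). -/
def idx (n k : ℕ) : Fin (n + 1) := ⟨k % (n + 1), Nat.mod_lt _ (Nat.succ_pos n)⟩

/-- `P(x_1,…,x_{n-1},s) = Σ_{0<j<j+k≤n} x_j x_k s^{n-j-k}` with `x_j = Re z_j`
and `s = Re ζ`, as a function on `ℂ^{n+1}`. -/
noncomputable def Pmod (n : ℕ) : (Fin (n + 1) → ℂ) → ℝ :=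
  fun p => ∑ j : Fin (n + 1), ∑ k : Fin (n + 1),
    if 1 ≤ (j : ℕ) ∧ 1 ≤ (k : ℕ) ∧ (j : ℕ) + (k : ℕ) ≤ n then
      (p j).re * (p k).re * ((p (idx n n)).re) ^ (n - (j : ℕ) - (k : ℕ))
    else 0

/-- Defining function `ρ = Re w - P` of the model hypersurface `M₀ = {ρ = 0}`. -/
noncomputable def rho (n : ℕ) : (Fin (n + 1) → ℂ) → ℝ :=
  fun p => (p (idx n 0)).re - Pmod n p

/-- The holomorphic field `X'_{-1} = 2 ∂/∂ζ + Σ_{j=2}^{n-1} (2j-2-n) z_{j-1} ∂/∂z_j`. -/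
noncomputable def vfXprime (n : ℕ) : (Fin (n + 1) → ℂ) → (Fin (n + 1) → ℂ) :=
  fun p =>
    (Pi.single (idx n n) 2 : Fin (n + 1) → ℂ)
      + ∑ j ∈ Finset.Icc 2 (n - 1),
          (((2 * (j : ℤ) - 2 - (n : ℤ) : ℤ) : ℂ) * p (idx n (j - 1)))
            • (Pi.single (idx n j) 1 : Fin (n + 1) → ℂ)

/-! ### Auxiliary lemmas -/


lemma hasFDerivAt_pow''_s15 {E : Type*} [NormedAddCommGroup E] [NormedSpace ℝ E]
    {f : E → ℝ} {f' : E →L[ℝ] ℝ} {x : E} (hf : HasFDerivAt f f' x) :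
    ∀ m : ℕ, HasFDerivAt (fun y => f y ^ m) (((m : ℝ) * f x ^ (m - 1)) • f') x := by
  intro m
  induction m with
  | zero => simpa using hasFDerivAt_const (1 : ℝ) x
  | succ m ih =>
    have h := ih.fun_mul hf
    have : (fun y => f y ^ m * f y) = fun y => f y ^ (m + 1) := by
      funext y; rw [← pow_succ]
    rw [this] at h
    refine h.congr_fderiv ?_
    symm
    rcases Nat.eq_zero_or_pos m with hm | hm
    · subst hm; simp
    · have h1 : f x * (↑m * f x ^ (m - 1)) = (m : ℝ) * f x ^ m := by
        rw [mul_comm (f x), mul_assoc]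
        congr 2
        rw [← pow_succ]
        congr 1
        omega
      rw [smul_smul, h1, ← add_smul]
      congr 1
      push_cast [Nat.add_sub_cancel]
      ring


noncomputable def reCoord (n : ℕ) (i : Fin (n + 1)) : (Fin (n + 1) → ℂ) →L[ℝ] ℝ :=
  Complex.reCLM.comp (ContinuousLinearMap.proj i)

lemma reCoord_apply (n : ℕ) (i : Fin (n + 1)) (v : Fin (n + 1) → ℂ) :
    reCoord n i v = (v i).re := rfl

lemma hasFDerivAt_reCoord (n : ℕ) (i : Fin (n + 1)) (p : Fin (n + 1) → ℂ) :
    HasFDerivAt (fun q : Fin (n + 1) → ℂ => (q i).re) (reCoord n i) p :=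
  (reCoord n i).hasFDerivAt

noncomputable def Dterm (n : ℕ) (p : Fin (n + 1) → ℂ) (j k : Fin (n + 1)) :
    (Fin (n + 1) → ℂ) →L[ℝ] ℝ :=
  if 1 ≤ (j : ℕ) ∧ 1 ≤ (k : ℕ) ∧ (j : ℕ) + (k : ℕ) ≤ n then
    ((p j).re * (p k).re) •
        ((((n - (j : ℕ) - (k : ℕ) : ℕ) : ℝ) *
            (p (idx n n)).re ^ (n - (j : ℕ) - (k : ℕ) - 1)) • reCoord n (idx n n))
      + ((p (idx n n)).re ^ (n - (j : ℕ) - (k : ℕ))) •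
          ((p j).re • reCoord n k + (p k).re • reCoord n j)
  else 0

lemma hasFDerivAt_Pmod (n : ℕ) (p : Fin (n + 1) → ℂ) :
    HasFDerivAt (Pmod n) (∑ j : Fin (n + 1), ∑ k : Fin (n + 1), Dterm n p j k) p := by
  unfold Pmod
  apply HasFDerivAt.fun_sum
  intro j _
  apply HasFDerivAt.fun_sum
  intro k _
  by_cases h : 1 ≤ (j : ℕ) ∧ 1 ≤ (k : ℕ) ∧ (j : ℕ) + (k : ℕ) ≤ n
  · simp only [Dterm, if_pos h]
    exact ((hasFDerivAt_reCoord n j p).mul (hasFDerivAt_reCoord n k p)).mul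
      (hasFDerivAt_pow''_s15 (hasFDerivAt_reCoord n (idx n n) p) _)
  · simp only [Dterm, if_neg h]
    exact hasFDerivAt_const 0 p

lemma fderiv_rho (n : ℕ) (p : Fin (n + 1) → ℂ) :
    fderiv ℝ (rho n) p
      = reCoord n (idx n 0) - ∑ j : Fin (n + 1), ∑ k : Fin (n + 1), Dterm n p j k := by
  have h : HasFDerivAt (rho n)
      (reCoord n (idx n 0) - ∑ j : Fin (n + 1), ∑ k : Fin (n + 1), Dterm n p j k) p :=
    (hasFDerivAt_reCoord n (idx n 0) p).sub (hasFDerivAt_Pmod n p)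
  exact h.fderiv

open Finset

open Finset

lemma shiftB (n : ℕ) (x : ℕ → ℝ) (j : ℕ) :
    ∑ k ∈ range (n+1), (if 1 ≤ j ∧ 2 ≤ k ∧ j + k ≤ n then
        x n ^ (n-j-k) * (x j * (((2*(k:ℤ)-2-(n:ℤ) : ℤ) : ℝ) * x (k-1))) else 0)
    = ∑ k ∈ range (n+1), (if 1 ≤ j ∧ 1 ≤ k ∧ j + k ≤ n-1 then
        x n ^ (n-j-k-1) * (x j * ((2*((k:ℝ)+1)-2-(n:ℝ)) * x k)) else 0) := by
  rw [Finset.sum_range_succ' (fun k => if 1 ≤ j ∧ 2 ≤ k ∧ j + k ≤ n then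
        x n ^ (n-j-k) * (x j * (((2*(k:ℤ)-2-(n:ℤ) : ℤ) : ℝ) * x (k-1))) else 0) n]
  rw [Finset.sum_range_succ (fun k => if 1 ≤ j ∧ 1 ≤ k ∧ j + k ≤ n-1 then
        x n ^ (n-j-k-1) * (x j * ((2*((k:ℝ)+1)-2-(n:ℝ)) * x k)) else 0) n]
  rw [if_neg (by omega : ¬(1 ≤ j ∧ 2 ≤ 0 ∧ j + 0 ≤ n)),
    if_neg (by omega : ¬(1 ≤ j ∧ 1 ≤ n ∧ j + n ≤ n-1)), add_zero, add_zero]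
  apply Finset.sum_congr rfl
  intro k _
  by_cases h : 1 ≤ j ∧ 1 ≤ k ∧ j + k ≤ n - 1
  · rw [if_pos (by omega : 1 ≤ j ∧ 2 ≤ k+1 ∧ j + (k+1) ≤ n), if_pos h]
    have e1 : n - j - (k+1) = n - j - k - 1 := by omega
    have e2 : (k+1) - 1 = k := by omega
    rw [e1, e2]
    push_cast
    ring
  · rw [if_neg (by omega : ¬(1 ≤ j ∧ 2 ≤ k+1 ∧ j + (k+1) ≤ n)), if_neg h]

lemma shiftC (n : ℕ) (x : ℕ → ℝ) (k : ℕ) :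
    ∑ j ∈ range (n+1), (if 2 ≤ j ∧ 1 ≤ k ∧ j + k ≤ n then
        x n ^ (n-j-k) * (x k * (((2*(j:ℤ)-2-(n:ℤ) : ℤ) : ℝ) * x (j-1))) else 0)
    = ∑ j ∈ range (n+1), (if 1 ≤ j ∧ 1 ≤ k ∧ j + k ≤ n-1 then
        x n ^ (n-j-k-1) * (x k * ((2*((j:ℝ)+1)-2-(n:ℝ)) * x j)) else 0) := by
  rw [Finset.sum_range_succ' (fun j => if 2 ≤ j ∧ 1 ≤ k ∧ j + k ≤ n then
        x n ^ (n-j-k) * (x k * (((2*(j:ℤ)-2-(n:ℤ) : ℤ) : ℝ) * x (j-1))) else 0) n]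
  rw [Finset.sum_range_succ (fun j => if 1 ≤ j ∧ 1 ≤ k ∧ j + k ≤ n-1 then
        x n ^ (n-j-k-1) * (x k * ((2*((j:ℝ)+1)-2-(n:ℝ)) * x j)) else 0) n]
  rw [if_neg (by omega : ¬(2 ≤ 0 ∧ 1 ≤ k ∧ 0 + k ≤ n)),
    if_neg (by omega : ¬(1 ≤ n ∧ 1 ≤ k ∧ n + k ≤ n-1)), add_zero, add_zero]
  apply Finset.sum_congr rfl
  intro j _
  by_cases h : 1 ≤ j ∧ 1 ≤ k ∧ j + k ≤ n - 1
  · rw [if_pos (by omega : 2 ≤ j+1 ∧ 1 ≤ k ∧ (j+1) + k ≤ n), if_pos h]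
    have e1 : n - (j+1) - k = n - j - k - 1 := by omega
    have e2 : (j+1) - 1 = j := by omega
    rw [e1, e2]
    push_cast
    ring
  · rw [if_neg (by omega : ¬(2 ≤ j+1 ∧ 1 ≤ k ∧ (j+1) + k ≤ n)), if_neg h]



lemma key_id (n : ℕ) (hn : 3 ≤ n) (x : ℕ → ℝ) :
    ∑ j ∈ range (n+1), ∑ k ∈ range (n+1),
      (if 1 ≤ j ∧ 1 ≤ k ∧ j + k ≤ n then
        x j * x k * (((n-j-k : ℕ) : ℝ) * x n ^ (n-j-k-1) * x n ^ 0 * 2)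
          + x n ^ (n-j-k) *
            (x j * (if 2 ≤ k ∧ k ≤ n-1 then ((2*(k:ℤ)-2-(n:ℤ) : ℤ) : ℝ) * x (k-1) else 0)
              + x k * (if 2 ≤ j ∧ j ≤ n-1 then ((2*(j:ℤ)-2-(n:ℤ) : ℤ) : ℝ) * x (j-1) else 0))
      else 0) = 0 := by
  have hsplit : ∀ j k : ℕ,
      (if 1 ≤ j ∧ 1 ≤ k ∧ j + k ≤ n then
        x j * x k * (((n-j-k : ℕ) : ℝ) * x n ^ (n-j-k-1) * x n ^ 0 * 2)
          + x n ^ (n-j-k) *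
            (x j * (if 2 ≤ k ∧ k ≤ n-1 then ((2*(k:ℤ)-2-(n:ℤ) : ℤ) : ℝ) * x (k-1) else 0)
              + x k * (if 2 ≤ j ∧ j ≤ n-1 then ((2*(j:ℤ)-2-(n:ℤ) : ℤ) : ℝ) * x (j-1) else 0))
      else 0)
      = (if 1 ≤ j ∧ 1 ≤ k ∧ j + k ≤ n-1 then
          x j * x k * (((n-j-k : ℕ) : ℝ) * x n ^ (n-j-k-1) * 2) else 0)
        + ((if 1 ≤ j ∧ 2 ≤ k ∧ j + k ≤ n then
            x n ^ (n-j-k) * (x j * (((2*(k:ℤ)-2-(n:ℤ) : ℤ) : ℝ) * x (k-1))) else 0)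
          + (if 2 ≤ j ∧ 1 ≤ k ∧ j + k ≤ n then
            x n ^ (n-j-k) * (x k * (((2*(j:ℤ)-2-(n:ℤ) : ℤ) : ℝ) * x (j-1))) else 0)) := by
    intro j k
    split_ifs <;>
      first
        | rfl
        | (exfalso; omega)
        | ring1
        | (have h0 : n - j - k = 0 := by omega
           rw [h0]; push_cast; ring1)
  simp only [hsplit]
  simp only [Finset.sum_add_distrib]
  rw [Finset.sum_congr rfl (fun j _ => shiftB n x j)]
  have hC : (∑ j ∈ range (n+1), ∑ k ∈ range (n+1),
      (if 2 ≤ j ∧ 1 ≤ k ∧ j + k ≤ n then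
        x n ^ (n-j-k) * (x k * (((2*(j:ℤ)-2-(n:ℤ) : ℤ) : ℝ) * x (j-1))) else 0))
      = ∑ j ∈ range (n+1), ∑ k ∈ range (n+1),
        (if 1 ≤ j ∧ 1 ≤ k ∧ j + k ≤ n-1 then
          x n ^ (n-j-k-1) * (x k * ((2*((j:ℝ)+1)-2-(n:ℝ)) * x j)) else 0) := by
    rw [Finset.sum_comm]
    rw [Finset.sum_congr rfl (fun k _ => shiftC n x k)]
    exact Finset.sum_comm
  rw [hC]
  simp only [← Finset.sum_add_distrib]
  apply Finset.sum_eq_zero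
  intro j _
  apply Finset.sum_eq_zero
  intro k _
  by_cases h : 1 ≤ j ∧ 1 ≤ k ∧ j + k ≤ n - 1
  · rw [if_pos h, if_pos h, if_pos h]
    rw [show (n-j-k:ℕ) = n - (j+k) from by omega,
      Nat.cast_sub (by omega : j + k ≤ n)]
    push_cast
    ring
  · rw [if_neg h, if_neg h, if_neg h]
    norm_num

lemma idx_coe (n i : ℕ) (h : i ≤ n) : ((idx n i : Fin (n + 1)) : ℕ) = i :=
  Nat.mod_eq_of_lt (by omega)

lemma idx_eq_iff {n i j : ℕ} (hi : i ≤ n) (hj : j ≤ n) : idx n i = idx n j ↔ i = j := by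
  constructor
  · intro h
    have := congrArg Fin.val h
    rwa [idx_coe n i hi, idx_coe n j hj] at this
  · rintro rfl; rfl

lemma vf_apply (n : ℕ) (p : Fin (n + 1) → ℂ) (i : ℕ) (hi : i ≤ n) :
    vfXprime n p (idx n i)
      = (if i = n then 2 else 0)
        + (if 2 ≤ i ∧ i ≤ n - 1 then
            ((2 * (i : ℤ) - 2 - (n : ℤ) : ℤ) : ℂ) * p (idx n (i - 1)) else 0) := by
  unfold vfXprime
  rw [Pi.add_apply, Finset.sum_apply]
  congr 1
  · rw [Pi.single_apply]
    by_cases h : i = n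
    · rw [if_pos (by rw [h]), if_pos h]
    · rw [if_neg (fun hh => h ((idx_eq_iff hi le_rfl).mp hh)), if_neg h]
  · simp only [Pi.smul_apply, Pi.single_apply, smul_eq_mul, mul_ite, mul_one, mul_zero]
    have hsum : (∑ j ∈ Finset.Icc 2 (n-1),
          if idx n i = idx n j then
            ((2 * (j : ℤ) - 2 - (n : ℤ) : ℤ) : ℂ) * p (idx n (j - 1)) else 0)
        = ∑ j ∈ Finset.Icc 2 (n-1),
          if i = j then
            ((2 * (j : ℤ) - 2 - (n : ℤ) : ℤ) : ℂ) * p (idx n (j - 1)) else 0 := by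
      apply Finset.sum_congr rfl
      intro j hj
      rw [Finset.mem_Icc] at hj
      exact if_congr (idx_eq_iff hi (by omega)) rfl rfl
    rw [hsum, Finset.sum_ite_eq (Finset.Icc 2 (n-1)) i
      (fun j => ((2 * (j : ℤ) - 2 - (n : ℤ) : ℤ) : ℂ) * p (idx n (j - 1)))]
    exact if_congr Finset.mem_Icc rfl rfl

lemma vre_eq (n : ℕ) (p : Fin (n + 1) → ℂ) (i : ℕ) (h1 : 1 ≤ i) (h2 : i ≤ n - 1)
    (hn : 3 ≤ n) :
    (vfXprime n p (idx n i)).re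
      = if 2 ≤ i ∧ i ≤ n - 1 then
          ((2 * (i : ℤ) - 2 - (n : ℤ) : ℤ) : ℝ) * (p (idx n (i - 1))).re else 0 := by
  rw [vf_apply n p i (by omega), if_neg (by omega : ¬ i = n), Complex.add_re,
    Complex.zero_re, zero_add]
  split_ifs with h
  · simp [Complex.mul_re]
  · simp

lemma vN_re (n : ℕ) (p : Fin (n + 1) → ℂ) (hn : 3 ≤ n) :
    (vfXprime n p (idx n n)).re = 2 := by
  rw [vf_apply n p n le_rfl, if_pos rfl, if_neg (by omega : ¬(2 ≤ n ∧ n ≤ n - 1))]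
  simp

lemma v0_re (n : ℕ) (p : Fin (n + 1) → ℂ) (hn : 3 ≤ n) :
    (vfXprime n p (idx n 0)).re = 0 := by
  rw [vf_apply n p 0 (by omega), if_neg (by omega : ¬ (0:ℕ) = n),
    if_neg (by omega : ¬(2 ≤ 0 ∧ 0 ≤ n - 1))]
  simp

lemma Dterm_apply (n : ℕ) (p : Fin (n + 1) → ℂ) (j k : Fin (n + 1)) (v : Fin (n + 1) → ℂ) :
    Dterm n p j k v
      = if 1 ≤ (j : ℕ) ∧ 1 ≤ (k : ℕ) ∧ (j : ℕ) + (k : ℕ) ≤ n then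
          (p j).re * (p k).re *
              (((n - (j : ℕ) - (k : ℕ) : ℕ) : ℝ) *
                (p (idx n n)).re ^ (n - (j : ℕ) - (k : ℕ) - 1) * (v (idx n n)).re)
            + (p (idx n n)).re ^ (n - (j : ℕ) - (k : ℕ)) *
                ((p j).re * (v k).re + (p k).re * (v j).re)
        else 0 := by
  unfold Dterm
  split_ifs with h
  · simp only [ContinuousLinearMap.add_apply, ContinuousLinearMap.smul_apply,
      reCoord_apply, smul_eq_mul]
    try ring1
  · simp


/-- The real part of the field `X'_{-1}` is tangent to the model hypersurface
`M₀ = {Re w = P}`: applying it to the defining function `ρ = Re w - P`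
gives a function vanishing identically. -/
theorem Xprime_tangent_to_model (n : ℕ) (hn : 3 ≤ n) :
    ∀ p : Fin (n + 1) → ℂ, fderiv ℝ (rho n) p (vfXprime n p) = 0 := by
  intro p
  rw [fderiv_rho n p, ContinuousLinearMap.sub_apply]
  have h0 : reCoord n (idx n 0) (vfXprime n p) = 0 := v0_re n p hn
  rw [h0, ContinuousLinearMap.sum_apply]
  simp only [ContinuousLinearMap.sum_apply]
  rw [zero_sub, neg_eq_zero]
  have hxid : ∀ j : Fin (n + 1), idx n (j : ℕ) = j :=
    fun j => Fin.ext (Nat.mod_eq_of_lt j.isLt)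
  have step1 : (∑ j : Fin (n + 1), ∑ k : Fin (n + 1), Dterm n p j k (vfXprime n p))
      = ∑ j ∈ Finset.range (n + 1), ∑ k ∈ Finset.range (n + 1),
          Dterm n p (idx n j) (idx n k) (vfXprime n p) := by
    rw [← Fin.sum_univ_eq_sum_range
      (fun j => ∑ k ∈ Finset.range (n + 1), Dterm n p (idx n j) (idx n k) (vfXprime n p))
      (n + 1)]
    apply Finset.sum_congr rfl
    intro j _
    rw [← Fin.sum_univ_eq_sum_range
      (fun k => Dterm n p (idx n (j : ℕ)) (idx n k) (vfXprime n p)) (n + 1)]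
    apply Finset.sum_congr rfl
    intro k _
    rw [hxid j, hxid k]
  rw [step1]
  refine Eq.trans ?_ (key_id n hn (fun i => (p (idx n i)).re))
  apply Finset.sum_congr rfl
  intro j hj
  apply Finset.sum_congr rfl
  intro k hk
  rw [Finset.mem_range] at hj hk
  rw [Dterm_apply]
  simp only [idx_coe n j (by omega), idx_coe n k (by omega)]
  by_cases h : 1 ≤ j ∧ 1 ≤ k ∧ j + k ≤ n
  · rw [if_pos h, if_pos h]
    rw [vN_re n p hn, vre_eq n p k (by omega) (by omega) hn,
      vre_eq n p j (by omega) (by omega) hn]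
    ring1
  · rw [if_neg h, if_neg h]
end
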